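/- Let r, a be positive integers and b, d be integers with a dividing lcm(b, d). Then for all completely multiplicative unimodular functions f_1, ..., f_r and every ε > 0, there exist infinitely many positive integers n with a n + b ≥ 1, a n + d ≥ 1, and max_{1 ≤ j ≤ r} |f_j(a n + b) − f_j(a n + d)| < ε; that is, liminf_{n → ∞} max_{1 ≤ j ≤ r} |f_j(a n + b) − f_j(a n + d)| = 0. -/

import Mathlib

open MeasureTheory Filter

/-- `f` is completely multiplicative and unimodular on the positive integers. -/
def CompMultUnimodular (f : ℕ → ℂ) : Prop :=
  (∀ n : ℕ, 1 ≤ n → ‖f n‖ = 1) ∧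
  (∀ m n : ℕ, 1 ≤ m → 1 ≤ n → f (m * n) = f m * f n)

namespace SDA



/-- c-set: strictly increasing positive c with `a*(c j - c i) ∣ c i`. -/
lemma cset_exists (a : ℕ) (ha : 0 < a) (R : ℕ) :
    ∃ c : ℕ → ℕ, (∀ i, i < R → 0 < c i) ∧ (∀ i j, i < j → j < R → c i < c j) ∧
      (∀ i j, i < j → j < R → (a * (c j - c i)) ∣ c i) := by
  induction R with
  | zero => exact ⟨fun _ => 1, by omega, by omega, by omega⟩
  | succ R ih =>
    obtain ⟨c, hpos, hmono, hdvd⟩ := ih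
    set L : ℕ := a * ∏ i ∈ Finset.range R, c i with hL
    have hprodpos : 0 < ∏ i ∈ Finset.range R, c i :=
      Finset.prod_pos (fun i hi => hpos i (Finset.mem_range.mp hi))
    have hLpos : 0 < L := Nat.mul_pos ha hprodpos
    have hcdvdprod : ∀ i, i < R → c i ∣ ∏ k ∈ Finset.range R, c k := by
      intro i hi
      exact Finset.dvd_prod_of_mem c (Finset.mem_range.mpr hi)
    have hcdvdL : ∀ i, i < R → a * c i ∣ L := by
      intro i hi; exact Nat.mul_dvd_mul_left a (hcdvdprod i hi)
    refine ⟨fun n => L + (match n with | 0 => 0 | (m+1) => c m), ?_, ?_, ?_⟩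
    · intro i _hi; rcases i with _ | i <;> simp <;> omega
    · rintro (_ | i) (_ | j) hij hj
      · omega
      · show L + 0 < L + c j
        have : 0 < c j := hpos _ (by omega); omega
      · omega
      · show L + c i < L + c j
        have : c i < c j := hmono _ _ (by omega) (by omega); omega
    · rintro (_ | i) (_ | j) hij hj
      · omega
      · show a * (L + c j - (L + 0)) ∣ L + 0
        have h1 : L + c j - (L + 0) = c j := by omega
        rw [h1, Nat.add_zero]
        exact hcdvdL _ (by omega)
      · omega
      · show a * (L + c j - (L + c i)) ∣ L + c i
        have hij' : i < j := by omega
        have hjR : j < R := by omega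
        have hmn : c i < c j := hmono _ _ hij' hjR
        have h1 : L + c j - (L + c i) = c j - c i := by omega
        rw [h1]
        have hold : a * (c j - c i) ∣ c i := hdvd _ _ hij' hjR
        have hd0 : (c j - c i) ∣ c i := dvd_trans (dvd_mul_left _ a) hold
        have hdL : a * (c j - c i) ∣ L := by
          rw [hL]
          exact Nat.mul_dvd_mul_left a (dvd_trans hd0 (hcdvdprod _ (by omega)))
        exact Nat.dvd_add hdL hold

/-- coprime column split of `a` along `b` and `d`. -/
lemma colsplitNat : ∀ (a : ℕ) (B D : ℕ), a ∣ Nat.lcm B D →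
    ∃ a₁ a₂ : ℕ, a = a₁ * a₂ ∧ Nat.Coprime a₁ a₂ ∧ a₁ ∣ B ∧ a₂ ∣ D := by
  intro a
  induction a using Nat.strong_induction_on with
  | _ a ih =>
    intro B D hdvd
    rcases Nat.eq_zero_or_pos a with rfl | hapos
    · have h0 : Nat.lcm B D = 0 := Nat.eq_zero_of_zero_dvd hdvd
      have : B = 0 ∨ D = 0 := by
        rcases Nat.eq_zero_or_pos B with hB | hB
        · exact Or.inl hB
        rcases Nat.eq_zero_or_pos D with hD | hD
        · exact Or.inr hD
        exact absurd h0 (Nat.lcm_ne_zero (by omega) (by omega))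
      rcases this with h | h
      · exact ⟨0, 1, by omega, by simp [Nat.coprime_one_right], by simp [h], one_dvd _⟩
      · exact ⟨1, 0, by omega, by simp [Nat.coprime_one_left], one_dvd _, by simp [h]⟩
    rcases eq_or_lt_of_le (Nat.succ_le_of_lt hapos) with h1 | h1
    · exact ⟨1, 1, by omega, Nat.coprime_one_left 1, one_dvd _, one_dvd _⟩
    have ha1 : 1 < a := h1
    set p := a.minFac with hp
    have hpp : p.Prime := Nat.minFac_prime (by omega)
    have hpa : p ∣ a := Nat.minFac_dvd a
    set k := a.factorization p with hk
    have hkpos : 0 < k := by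
      rw [hk]
      exact (Nat.Prime.factorization_pos_of_dvd hpp (by omega) hpa)
    have hPd : p ^ k ∣ a := Nat.ordProj_dvd a p
    have hsplit : p ^ k * (a / p ^ k) = a := Nat.ordProj_mul_ordCompl_eq_self a p
    have hcop : Nat.Coprime p (a / p ^ k) := Nat.coprime_ordCompl hpp (by omega)
    have hlt : a / p ^ k < a := by
      apply Nat.div_lt_self (by omega)
      exact Nat.one_lt_pow (by omega) hpp.one_lt
    have hPBD : p ^ k ∣ B ∨ p ^ k ∣ D := by
      rcases Nat.eq_zero_or_pos B with hB | hB
      · exact Or.inl (by simp [hB])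
      rcases Nat.eq_zero_or_pos D with hD | hD
      · exact Or.inr (by simp [hD])
      have hlcm0 : Nat.lcm B D ≠ 0 := Nat.lcm_ne_zero (by omega) (by omega)
      have hPlcm : p ^ k ∣ Nat.lcm B D := dvd_trans hPd hdvd
      have hkle : k ≤ (Nat.lcm B D).factorization p :=
        (hpp.pow_dvd_iff_le_factorization hlcm0).mp hPlcm
      rw [Nat.factorization_lcm (by omega) (by omega)] at hkle
      simp only [Finsupp.sup_apply, le_sup_iff] at hkle
      rcases hkle with h | h
      · exact Or.inl ((hpp.pow_dvd_iff_le_factorization (by omega)).mpr h)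
      · exact Or.inr ((hpp.pow_dvd_iff_le_factorization (by omega)).mpr h)
    have hrec : (a / p ^ k) ∣ Nat.lcm B D := dvd_trans (Nat.ordCompl_dvd a p) hdvd
    obtain ⟨a₁', a₂', heq', hcop', h1', h2'⟩ := ih (a / p ^ k) hlt B D hrec
    have hcopP1 : Nat.Coprime p a₁' := hcop.coprime_dvd_right (heq' ▸ Dvd.intro a₂' rfl)
    have hcopP2 : Nat.Coprime p a₂' := hcop.coprime_dvd_right (heq' ▸ Dvd.intro_left a₁' rfl)
    rcases hPBD with hPB | hPD
    · refine ⟨p ^ k * a₁', a₂', ?_, ?_, ?_, h2'⟩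
      · rw [mul_assoc, ← heq', hsplit]
      · exact Nat.Coprime.mul (hcopP2.pow_left k) hcop'
      · exact (Nat.Coprime.mul_dvd_of_dvd_of_dvd (hcopP1.pow_left k) hPB h1')
    · refine ⟨a₁', p ^ k * a₂', ?_, ?_, h1', ?_⟩
      · rw [← hsplit, heq']; ring
      · exact Nat.Coprime.mul_right ((hcopP1.pow_left k).symm) hcop'
      · exact (Nat.Coprime.mul_dvd_of_dvd_of_dvd (hcopP2.pow_left k) hPD h2')

/-- strip split: `n = u*v` with `v` coprime to `m` and `u ∣ m ^ K` for some `K`. -/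
lemma strip : ∀ (n : ℕ), 0 < n → ∀ (m : ℕ), ∃ u v K : ℕ, n = u * v ∧ Nat.Coprime v m ∧ u ∣ m ^ K := by
  intro n
  induction n using Nat.strong_induction_on with
  | _ n ih =>
    intro hn m
    by_cases hc : Nat.Coprime n m
    · exact ⟨1, n, 0, by ring, hc, by simp⟩
    · have hg : 1 < Nat.gcd n m := by
        have h0 : 0 < Nat.gcd n m := Nat.gcd_pos_of_pos_left m hn
        have h1 : Nat.gcd n m ≠ 1 := hc
        omega
      set p := (Nat.gcd n m).minFac with hp
      have hpp : p.Prime := Nat.minFac_prime (by omega)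
      have hpn : p ∣ n := dvd_trans (Nat.minFac_dvd _) (Nat.gcd_dvd_left _ _)
      have hpm : p ∣ m := dvd_trans (Nat.minFac_dvd _) (Nat.gcd_dvd_right _ _)
      obtain ⟨n', hneq⟩ := hpn
      have hn' : 0 < n' := by
        rcases Nat.eq_zero_or_pos n' with h | h
        · subst h; omega
        · exact h
      have hlt : n' < n := by
        have h2 := hpp.one_lt
        calc n' < p * n' := lt_mul_of_one_lt_left hn' h2
          _ = n := hneq.symm
      obtain ⟨u, v, K, heq, hcop, hdvd⟩ := ih n' hlt hn' m
      exact ⟨p * u, v, K + 1, by rw [hneq, heq]; ring, hcop,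
        by rw [pow_succ, mul_comm (m^K) m]; exact mul_dvd_mul hpm hdvd⟩

/-- geometric sum step: if `a ∣ g - 1` then `a*(g^e - 1) ∣ g^(a*e) - 1`. -/
lemma sigma_dvd (a : ℕ) (g : ℤ) (hg : (a:ℤ) ∣ g - 1) (e : ℕ) :
    (a:ℤ) * (g ^ e - 1) ∣ g ^ (a * e) - 1 := by
  have hgeom : (∑ l ∈ Finset.range a, (g ^ e) ^ l) * (g ^ e - 1) = (g ^ e) ^ a - 1 :=
    geom_sum_mul (g ^ e) a
  have hT : (a:ℤ) ∣ ∑ l ∈ Finset.range a, (g ^ e) ^ l := by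
    have h1 : (∑ l ∈ Finset.range a, (g ^ e) ^ l) - (a:ℤ) =
        ∑ l ∈ Finset.range a, ((g ^ e) ^ l - 1) := by
      rw [Finset.sum_sub_distrib]
      simp
    have h2 : (a:ℤ) ∣ ∑ l ∈ Finset.range a, ((g ^ e) ^ l - 1) := by
      apply Finset.dvd_sum
      intro l _
      calc (a:ℤ) ∣ g - 1 := hg
        _ ∣ (g^e)^l - 1 := by
            rw [← pow_mul]
            simpa using sub_dvd_pow_sub_pow g 1 (e*l)
    have := dvd_add h2 (dvd_refl (a:ℤ))
    rwa [← h1, sub_add_cancel] at this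
  calc (a:ℤ) * (g ^ e - 1) ∣ (∑ l ∈ Finset.range a, (g ^ e) ^ l) * (g ^ e - 1) :=
        mul_dvd_mul_right hT _
    _ = (g^e)^a - 1 := hgeom
    _ = g ^ (a * e) - 1 := by rw [← pow_mul, mul_comm]

/-- chain: if `a ∣ g - 1` and `a*e ∣ u` then `a*(g^e-1) ∣ g^u - 1`. -/
lemma chain_dvd (a e u : ℕ) (g : ℤ) (hg : (a:ℤ) ∣ g - 1) (h : (a * e) ∣ u) :
    (a:ℤ) * (g ^ e - 1) ∣ g ^ u - 1 := by
  obtain ⟨s, rfl⟩ := h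
  calc (a:ℤ) * (g ^ e - 1) ∣ g ^ (a*e) - 1 := sigma_dvd a g hg e
    _ ∣ (g ^ (a*e)) ^ s - 1 := by
        simpa using sub_dvd_pow_sub_pow (g ^ (a*e)) 1 s
    _ = g ^ (a * e * s) - 1 := by rw [← pow_mul]



/-- pigeonhole: in any sequence of unit-polydisc points, two of the first R are ε-close. -/
lemma pigeon (r : ℕ) (ε : ℝ) (hε : 0 < ε) :
    ∃ R : ℕ, 0 < R ∧ ∀ v : ℕ → (Fin r → ℂ), (∀ i, ‖v i‖ ≤ 1) →
      ∃ i j, i < j ∧ j < R ∧ dist (v i) (v j) < ε := by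
  have hK : IsCompact (Metric.closedBall (0 : Fin r → ℂ) 1) := isCompact_closedBall _ _
  have htb := hK.totallyBounded
  obtain ⟨t, htfin, hcover⟩ := Metric.totallyBounded_iff.mp htb (ε/2) (by positivity)
  refine ⟨htfin.toFinset.card + 1, by omega, ?_⟩
  intro v hv
  have hmem : ∀ i, v i ∈ Metric.closedBall (0 : Fin r → ℂ) 1 := by
    intro i; rw [Metric.mem_closedBall, dist_zero_right]; exact hv i
  have hch : ∀ i : ℕ, ∃ y ∈ htfin.toFinset, v i ∈ Metric.ball y (ε/2) := by
    intro i
    have := hcover (hmem i)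
    simp only [Set.mem_iUnion, exists_prop] at this
    obtain ⟨y, hy, hvy⟩ := this
    exact ⟨y, htfin.mem_toFinset.mpr hy, hvy⟩
  choose c hct hcb using hch
  have hmap : ∀ i ∈ Finset.range (htfin.toFinset.card + 1), c i ∈ htfin.toFinset := by
    intro i _; exact hct i
  have hcard : htfin.toFinset.card < (Finset.range (htfin.toFinset.card + 1)).card := by
    simp
  obtain ⟨i, hi, j, hj, hne, heq⟩ :=
    Finset.exists_ne_map_eq_of_card_lt_of_maps_to hcard hmap
  have hdist : dist (v i) (v j) < ε := by
    have h1 := hcb i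
    have h2 := hcb j
    rw [Metric.mem_ball] at h1 h2
    calc dist (v i) (v j) ≤ dist (v i) (c i) + dist (c i) (v j) := dist_triangle _ _ _
      _ = dist (v i) (c i) + dist (v j) (c j) := by rw [heq, dist_comm (c j)]
      _ < ε/2 + ε/2 := by exact add_lt_add h1 h2
      _ = ε := by ring
  rcases Nat.lt_or_ge i j with h | h
  · exact ⟨i, j, h, Finset.mem_range.mp hj, hdist⟩
  · have : j < i := by omega
    exact ⟨j, i, this, Finset.mem_range.mp hi, by rwa [dist_comm]⟩

lemma toNat_mul_int (u v : ℤ) (hu : 0 ≤ u) (hv : 0 ≤ v) : (u*v).toNat = u.toNat * v.toNat := by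
  have h := Int.toNat_of_nonneg hu
  have h2 := Int.toNat_of_nonneg hv
  have h3 : (0:ℤ) ≤ u * v := mul_nonneg hu hv
  have h4 := Int.toNat_of_nonneg h3
  have : ((u*v).toNat : ℤ) = ((u.toNat * v.toNat : ℕ) : ℤ) := by
    push_cast
    rw [h, h2, h4]
  exact_mod_cast this

lemma one_le_toNat {u : ℤ} (hu : 1 ≤ u) : 1 ≤ u.toNat := by omega


lemma fmul {f : ℕ → ℂ} (hf : CompMultUnimodular f) {u v : ℤ} (hu : 1 ≤ u) (hv : 1 ≤ v) :
    f ((u*v).toNat) = f u.toNat * f v.toNat := by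
  rw [toNat_mul_int u v (by omega) (by omega)]
  exact hf.2 _ _ (one_le_toNat hu) (one_le_toNat hv)

lemma abs_eq {f : ℕ → ℂ} (hf : CompMultUnimodular f) {P Q P' Q' D N₁ N₂ : ℤ}
    (hP : 1 ≤ P) (hQ : 1 ≤ Q) (hP' : 1 ≤ P') (hQ' : 1 ≤ Q') (hD : 1 ≤ D)
    (hN₁ : 1 ≤ N₁) (hN₂ : 1 ≤ N₂)
    (e₁ : P * Q' = D * N₁) (e₂ : Q * P' = D * N₂) :
    ‖f N₁.toNat - f N₂.toNat‖ =
      ‖f P.toNat * (starRingEnd ℂ) (f Q.toNat)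
        - f P'.toNat * (starRingEnd ℂ) (f Q'.toNat)‖ := by
  set α := f P.toNat with hα
  set β := f Q.toNat with hβ
  set α' := f P'.toNat with hα'
  set β' := f Q'.toNat with hβ'
  set A := f N₁.toNat with hA
  set B := f N₂.toNat with hB
  set δ := f D.toNat with hδ
  have habsβ : ‖β‖ = 1 := hf.1 _ (one_le_toNat hQ)
  have habsβ' : ‖β'‖ = 1 := hf.1 _ (one_le_toNat hQ')
  have habsδ : ‖δ‖ = 1 := hf.1 _ (one_le_toNat hD)
  have hconjβ : (starRingEnd ℂ) β * β = 1 := by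
    rw [mul_comm, Complex.mul_conj]
    norm_cast
    rw [Complex.normSq_eq_norm_sq, habsβ]; norm_num
  have hconjβ' : (starRingEnd ℂ) β' * β' = 1 := by
    rw [mul_comm, Complex.mul_conj]
    norm_cast
    rw [Complex.normSq_eq_norm_sq, habsβ']; norm_num
  have h1 : α * β' = δ * A := by
    rw [hα, hβ', hδ, hA, ← fmul hf hP hQ', ← fmul hf hD hN₁, e₁]
  have h2 : β * α' = δ * B := by
    rw [hβ, hα', hδ, hB, ← fmul hf hQ hP', ← fmul hf hD hN₂, e₂]
  have key : (α * (starRingEnd ℂ) β - α' * (starRingEnd ℂ) β') * (β * β') = δ * (A - B) := by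
    have expand : (α * (starRingEnd ℂ) β - α' * (starRingEnd ℂ) β') * (β * β')
        = (α * β') * ((starRingEnd ℂ) β * β) - (β * α') * ((starRingEnd ℂ) β' * β') := by ring
    rw [expand, hconjβ, hconjβ', mul_one, mul_one, h1, h2]
    ring
  have habs : ‖(α * (starRingEnd ℂ) β - α' * (starRingEnd ℂ) β') * (β * β')‖
      = ‖α * (starRingEnd ℂ) β - α' * (starRingEnd ℂ) β'‖ := by
    rw [norm_mul, norm_mul, habsβ, habsβ']; ring
  rw [key] at habs
  rw [norm_mul, habsδ, one_mul] at habs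
  exact habs

/-- unbounded subsets of ℕ are infinite. -/
lemma infinite_of_unbounded {S : Set ℕ} (h : ∀ m : ℕ, ∃ n ∈ S, m < n) : S.Infinite := by
  intro hfin
  obtain ⟨m, hm⟩ := hfin.bddAbove
  obtain ⟨n, hn, hmn⟩ := h m
  exact absurd (hm hn) (by omega)

set_option maxHeartbeats 1600000 in
/-- The clique construction. -/
lemma clique (a a₁ a₂ : ℕ) (ha : 0 < a) (b d : ℤ) (hbd : b < d)
    (hsplit : a = a₁ * a₂) (hcop : Nat.Coprime a₁ a₂)
    (h1b : (a₁:ℤ) ∣ b) (h2d : (a₂:ℤ) ∣ d)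
    (R : ℕ) (m : ℤ) :
    ∃ x : ℕ → ℤ,
      (∀ i j, i < j → j < R → x i < x j) ∧
      (∀ i, i < R → m < x i) ∧
      (∀ i, i < R → (a:ℤ) ∣ x i - b) ∧
      (∀ i j, i < j → j < R → (a:ℤ) * (x j - x i) ∣ x i * (x i + (d - b))) := by
  have ha₁ : 0 < a₁ := by
    rcases Nat.eq_zero_or_pos a₁ with h | h
    · subst h; simp at hsplit; omega
    · exact h
  have ha₂ : 0 < a₂ := by
    rcases Nat.eq_zero_or_pos a₂ with h | h
    · subst h; simp at hsplit; omega
    · exact h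
  set Δ : ℤ := d - b with hΔdef
  have hΔ1 : 1 ≤ Δ := by omega
  set ΔN : ℕ := Δ.toNat with hΔN
  have hΔNcast : (ΔN : ℤ) = Δ := Int.toNat_of_nonneg (by omega)
  obtain ⟨c, hcpos, hcmono, hcdvd⟩ := cset_exists a ha R
  set g : ℕ := a + 1 with hgdef
  set gZ : ℤ := (g : ℤ) with hgZdef
  have hgZ1 : (a : ℤ) ∣ gZ - 1 := by
    rw [hgZdef, hgdef]; push_cast; simp
  have hg2 : (2:ℤ) ≤ gZ := by rw [hgZdef, hgdef]; push_cast; omega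
  have hgpow1 : ∀ n : ℕ, (1:ℤ) ≤ gZ ^ n := fun n => one_le_pow₀ (by omega)
  set P : Finset (ℕ × ℕ) :=
    (Finset.range R ×ˢ Finset.range R).filter (fun q => q.1 < q.2) with hPdef
  have hmemP : ∀ i j, i < j → j < R → (i, j) ∈ P := by
    intro i j hij hj
    rw [hPdef, Finset.mem_filter, Finset.mem_product]
    exact ⟨⟨Finset.mem_range.mpr (by omega), Finset.mem_range.mpr hj⟩, hij⟩
  set E : ℕ × ℕ → ℕ := fun q => max (c q.2 - c q.1) 1 with hEdef
  have hEdefq : ∀ q, E q = max (c q.2 - c q.1) 1 := fun q => rfl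
  have hEpos : ∀ q, 0 < E q := fun q => by rw [hEdefq]; omega
  set Λ : ℕ × ℕ → ℕ := fun q => g ^ (E q) - 1 with hΛdef
  have hΛdefq : ∀ q, Λ q = g ^ (E q) - 1 := fun q => rfl
  have hgpow1N : ∀ n : ℕ, 1 ≤ g ^ n := fun n => Nat.one_le_pow _ _ (by omega)
  have hΛpos : ∀ q, 0 < Λ q := by
    intro q
    rw [hΛdefq]
    have h1 : g ^ 1 ≤ g ^ (E q) := Nat.pow_le_pow_right (by omega) (hEpos q)
    have h2 : g ^ 1 = g := pow_one g
    omega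
  choose u v K hΛeq hvcop hudvd using fun q => strip (Λ q) (hΛpos q) a₁
  have hupos : ∀ q, 0 < u q := by
    intro q
    rcases Nat.eq_zero_or_pos (u q) with h | h
    · exfalso; have h2 := hΛeq q; rw [h] at h2; simp at h2; have := hΛpos q; omega
    · exact h
  have hvpos : ∀ q, 0 < v q := by
    intro q
    rcases Nat.eq_zero_or_pos (v q) with h | h
    · exfalso; have h2 := hΛeq q; rw [h] at h2; simp at h2; have := hΛpos q; omega
    · exact h
  set M₁ : ℕ := a₁ * ∏ q ∈ P, u q with hM₁def
  set Ξ : ℕ := a₂ * ∏ q ∈ P, v q with hΞdef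
  have hM₁pos : 0 < M₁ := by
    rw [hM₁def]
    exact Nat.mul_pos ha₁ (Finset.prod_pos (fun q _ => hupos q))
  have hΞpos : 0 < Ξ := by
    rw [hΞdef]
    exact Nat.mul_pos ha₂ (Finset.prod_pos (fun q _ => hvpos q))
  have hcopMΞ : Nat.Coprime M₁ Ξ := by
    rw [hM₁def, hΞdef]
    have c2 : ∀ q ∈ P, Nat.Coprime a₁ (v q) := fun q _ => (hvcop q).symm
    have c3 : ∀ q ∈ P, Nat.Coprime (u q) a₂ := fun q _ =>
      Nat.Coprime.coprime_dvd_left (hudvd q) (hcop.pow_left (K q))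
    have c4 : ∀ q ∈ P, ∀ q' ∈ P, Nat.Coprime (u q) (v q') := fun q _ q' _ =>
      Nat.Coprime.coprime_dvd_left (hudvd q) (((hvcop q').symm).pow_left (K q))
    have h1 : Nat.Coprime a₁ (a₂ * ∏ q ∈ P, v q) :=
      Nat.Coprime.mul_right hcop (Nat.Coprime.prod_right c2)
    have h2 : Nat.Coprime (∏ q ∈ P, u q) (a₂ * ∏ q ∈ P, v q) := by
      apply Nat.Coprime.prod_left
      intro q hq
      exact Nat.Coprime.mul_right (c3 q hq) (Nat.Coprime.prod_right (c4 q hq))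
    exact Nat.Coprime.mul h1 h2
  set S : ℕ := 2 * a * ∏ i ∈ Finset.range R, c i with hSdef
  have hprodpos : 0 < ∏ i ∈ Finset.range R, c i :=
    Finset.prod_pos (fun i hi => hcpos i (Finset.mem_range.mp hi))
  have hS1 : 1 ≤ S := by
    have h0 : 0 < S := by rw [hSdef]; exact Nat.mul_pos (by omega) hprodpos
    omega
  have hciS : ∀ i, i < R → c i ≤ S := by
    intro i hi
    have h1 : c i ∣ ∏ k ∈ Finset.range R, c k :=
      Finset.dvd_prod_of_mem c (Finset.mem_range.mpr hi)
    have h2 : c i ≤ ∏ k ∈ Finset.range R, c k := Nat.le_of_dvd hprodpos h1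
    have h3 : ∏ k ∈ Finset.range R, c k ≤ 2 * a * ∏ k ∈ Finset.range R, c k := by nlinarith
    rw [hSdef]; omega
  have haeS : ∀ i j, i < j → j < R → a * (c j - c i) ∣ S := by
    intro i j hij hj
    have h0 : a * (c j - c i) ∣ c i := hcdvd i j hij hj
    have h1 : (c j - c i) ∣ c i := dvd_trans (dvd_mul_left _ a) h0
    have h2 : (c j - c i) ∣ ∏ k ∈ Finset.range R, c k :=
      dvd_trans h1 (Finset.dvd_prod_of_mem c (Finset.mem_range.mpr (by omega)))
    rw [hSdef]
    obtain ⟨w, hw⟩ := h2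
    exact ⟨2 * w, by rw [hw]; ring⟩
  have haeSc : ∀ i j, i < j → j < R → a * (c j - c i) ∣ S - c i := by
    intro i j hij hj
    exact Nat.dvd_sub (haeS i j hij hj) (hcdvd i j hij hj)
  obtain ⟨κ₀, hκ₀1, hκ₀2⟩ := Nat.chineseRemainder hcopMΞ (1 + ΔN) 1
  set T : ℕ := ΔN + m.toNat + 2 with hTdef
  set κ : ℕ := κ₀ + M₁ * Ξ * T with hκdef
  have hκmod1 : κ ≡ 1 + ΔN [MOD M₁] := by
    have h1 : κ ≡ κ₀ [MOD M₁] := by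
      rw [hκdef]
      exact ((Nat.modEq_iff_dvd' (by omega)).mpr (by
        simpa using (Dvd.intro (Ξ * T) (by ring) : M₁ ∣ M₁ * Ξ * T))).symm
    exact h1.trans hκ₀1
  have hκmod2 : κ ≡ 1 [MOD Ξ] := by
    have h1 : κ ≡ κ₀ [MOD Ξ] := by
      rw [hκdef]
      exact ((Nat.modEq_iff_dvd' (by omega)).mpr (by
        simpa using (Dvd.intro (M₁ * T) (by ring) : Ξ ∣ M₁ * Ξ * T))).symm
    exact h1.trans hκ₀2
  have hκbig : ΔN + m.toNat + 2 ≤ κ := by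
    rw [hκdef, hTdef]
    have h1 : 1 * (ΔN + m.toNat + 2) ≤ M₁ * Ξ * (ΔN + m.toNat + 2) := by
      apply Nat.mul_le_mul_right
      exact Nat.one_le_iff_ne_zero.mpr (by positivity)
    omega
  set κZ : ℤ := (κ : ℤ) with hκZdef
  have hκZ1 : 1 ≤ κZ := by rw [hκZdef]; exact_mod_cast (by omega : 1 ≤ κ)
  have hκZΔ : Δ + 1 ≤ κZ := by
    rw [hκZdef, ← hΔNcast]
    exact_mod_cast (by omega : ΔN + 1 ≤ κ)
  have hκZm : m < κZ := by
    rw [hκZdef]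
    have h1 : (m.toNat : ℤ) + 1 ≤ (κ : ℤ) := by exact_mod_cast (by omega : m.toNat + 1 ≤ κ)
    have h2 : m ≤ (m.toNat : ℤ) := Int.self_le_toNat m
    omega
  have hM₁κ : (M₁ : ℤ) ∣ κZ - (1 + Δ) := by
    have h0 := Nat.ModEq.dvd hκmod1.symm
    rw [hκZdef, ← hΔNcast]
    have h1 : ((1 + ΔN : ℕ) : ℤ) = 1 + (ΔN:ℤ) := by push_cast; ring
    rw [← h1]
    exact_mod_cast h0
  have hΞκ : (Ξ : ℤ) ∣ κZ - 1 := by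
    have h0 := Nat.ModEq.dvd hκmod2.symm
    rw [hκZdef]
    exact_mod_cast h0
  -- construction
  set F : ℤ := κZ * gZ ^ S with hFdef
  set α : ℤ := κZ * (F - Δ) with hαdef
  set x : ℕ → ℤ := fun i => α * gZ ^ (c i) - F with hxdef
  have hxi : ∀ i, x i = α * gZ ^ (c i) - F := fun _ => rfl
  set X : ℕ → ℤ := fun i => κZ * gZ ^ S - Δ - gZ ^ (S - c i) with hXdef
  have hXi : ∀ i, X i = κZ * gZ ^ S - Δ - gZ ^ (S - c i) := fun _ => rfl
  set Y : ℕ → ℤ := fun i => κZ * gZ ^ (c i) - 1 with hYdef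
  have hYi : ∀ i, Y i = κZ * gZ ^ (c i) - 1 := fun _ => rfl
  have hFΔ1 : 1 ≤ F - Δ := by
    have h1 : κZ * 1 ≤ κZ * gZ ^ S := by
      apply mul_le_mul_of_nonneg_left (hgpow1 S) (by omega)
    rw [hFdef]; omega
  have hα1 : 1 ≤ α := by
    rw [hαdef]; nlinarith
  have hF1 : ∀ i, i < R → x i = κZ * gZ ^ (c i) * X i := by
    intro i hi
    have hpow : gZ ^ (c i) * gZ ^ (S - c i) = gZ ^ S := by
      rw [← pow_add]
      congr 1
      have := hciS i hi
      omega
    rw [hxi, hXi, hαdef, hFdef]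
    linear_combination (κZ : ℤ) * hpow
  have hF2 : ∀ i, x i + Δ = (F - Δ) * Y i := by
    intro i
    rw [hxi, hYi, hαdef]
    ring
  have hF3 : ∀ i j, i < j → j < R → x j - x i = α * gZ ^ (c i) * (gZ ^ (c j - c i) - 1) := by
    intro i j hij hj
    have hpow : gZ ^ (c j) = gZ ^ (c i) * gZ ^ (c j - c i) := by
      rw [← pow_add]
      congr 1
      have := hcmono i j hij hj
      omega
    rw [hxi, hxi, hpow]
    ring
  have hXpos : ∀ i, i < R → 1 ≤ X i := by
    intro i hi
    rw [hXi]
    have h1 : gZ ^ (S - c i) ≤ gZ ^ (S - 1) := by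
      apply pow_le_pow_right₀ (by omega)
      have := hcpos i hi
      omega
    have h2 : gZ ^ S = gZ * gZ ^ (S - 1) := by
      rw [← pow_succ']
      congr 1
      omega
    have h3 : 1 ≤ gZ ^ (S - 1) := hgpow1 _
    have p1 : (Δ + 1) * gZ ^ S ≤ κZ * gZ ^ S :=
      mul_le_mul_of_nonneg_right hκZΔ (by linarith [hgpow1 S])
    have p2 : (0:ℤ) ≤ Δ * (gZ ^ S - 1) :=
      mul_nonneg (by omega) (by linarith [hgpow1 S])
    have p3 : gZ ^ (S-1) * 2 ≤ gZ ^ (S-1) * gZ :=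
      mul_le_mul_of_nonneg_left hg2 (by linarith)
    nlinarith [p1, p2, p3, h1, h2, h3]
  have hxge : ∀ i, i < R → κZ ≤ x i := by
    intro i hi
    rw [hF1 i hi]
    have h1 : 1 ≤ gZ ^ (c i) := hgpow1 _
    have h2 : 1 ≤ X i := hXpos i hi
    have p1 : κZ * 1 ≤ κZ * gZ ^ (c i) := mul_le_mul_of_nonneg_left h1 (by omega)
    have p2 : (κZ * gZ ^ (c i)) * 1 ≤ (κZ * gZ ^ (c i)) * X i :=
      mul_le_mul_of_nonneg_left h2 (by nlinarith)
    linarith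
  have hgu : ∀ n : ℕ, (a : ℤ) ∣ gZ ^ n - 1 := by
    intro n
    calc (a:ℤ) ∣ gZ - 1 := hgZ1
      _ ∣ gZ ^ n - 1 := by simpa using sub_dvd_pow_sub_pow gZ 1 n
  have ha₁a : (a₁:ℤ) ∣ (a:ℤ) := by exact_mod_cast (⟨a₂, hsplit⟩ : a₁ ∣ a)
  have ha₂a : (a₂:ℤ) ∣ (a:ℤ) := by exact_mod_cast (⟨a₁, by rw [hsplit]; ring⟩ : a₂ ∣ a)
  have hXsum : ∀ i, X i = (κZ - (1 + Δ)) + κZ * (gZ ^ S - 1) - (gZ ^ (S - c i) - 1) := by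
    intro i
    rw [hXi]; ring
  have hYsum : ∀ i, Y i = (κZ - 1) * gZ ^ (c i) + (gZ ^ (c i) - 1) := by
    intro i
    rw [hYi]; ring
  have ha₁X : ∀ i, i < R → (a₁ : ℤ) ∣ X i := by
    intro i hi
    rw [hXsum i]
    have t1 : (a₁:ℤ) ∣ κZ - (1 + Δ) :=
      dvd_trans (by exact_mod_cast (⟨∏ q ∈ P, u q, hM₁def⟩ : a₁ ∣ M₁)) hM₁κ
    have t2 : (a₁:ℤ) ∣ κZ * (gZ ^ S - 1) := Dvd.dvd.mul_left (dvd_trans ha₁a (hgu S)) κZ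
    have t3 : (a₁:ℤ) ∣ gZ ^ (S - c i) - 1 := dvd_trans ha₁a (hgu _)
    exact dvd_sub (dvd_add t1 t2) t3
  have ha₂Y : ∀ i, i < R → (a₂ : ℤ) ∣ Y i := by
    intro i hi
    rw [hYsum i]
    have t1 : (a₂:ℤ) ∣ (κZ - 1) * gZ ^ (c i) := by
      apply Dvd.dvd.mul_right
      exact dvd_trans (by exact_mod_cast (⟨∏ q ∈ P, v q, hΞdef⟩ : a₂ ∣ Ξ)) hΞκ
    have t2 : (a₂:ℤ) ∣ gZ ^ (c i) - 1 := dvd_trans ha₂a (hgu _)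
    exact dvd_add t1 t2
  have hclass : ∀ i, i < R → (a:ℤ) ∣ x i - b := by
    intro i hi
    have hco : IsCoprime (a₁ : ℤ) (a₂ : ℤ) := by
      rw [Int.isCoprime_iff_gcd_eq_one]
      simpa using hcop
    have d1 : (a₁:ℤ) ∣ x i - b := by
      have hx1 : (a₁:ℤ) ∣ x i := by
        rw [hF1 i hi]
        exact Dvd.dvd.mul_left (ha₁X i hi) _
      exact dvd_sub hx1 h1b
    have d2 : (a₂:ℤ) ∣ x i - b := by
      have hx2 : (a₂:ℤ) ∣ x i + Δ := by
        rw [hF2 i]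
        exact Dvd.dvd.mul_left (ha₂Y i hi) _
      have heq : x i - b = (x i + Δ) - d := by rw [hΔdef]; ring
      rw [heq]
      exact dvd_sub hx2 h2d
    have hfin := hco.mul_dvd d1 d2
    rwa [show ((a₁:ℤ) * (a₂:ℤ)) = (a:ℤ) from by exact_mod_cast hsplit.symm] at hfin
  have hmain : ∀ i j, i < j → j < R → (a:ℤ) * (x j - x i) ∣ x i * (x i + Δ) := by
    intro i j hij hj
    have hiR : i < R := by omega
    set e : ℕ := c j - c i with hedef
    have he1 : 1 ≤ e := by
      have := hcmono i j hij hj; omega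
    have hqP : (i, j) ∈ P := hmemP i j hij hj
    have hEq : E (i, j) = e := by
      rw [hEdefq]; simp only; omega
    have hΛcast : ((Λ (i,j) : ℕ) : ℤ) = gZ ^ e - 1 := by
      rw [hΛdefq, hEq]
      push_cast [Nat.cast_sub (hgpow1N e)]
      rw [hgZdef, hgdef]
    have huΛ : (u (i,j) : ℤ) ∣ gZ ^ e - 1 := by
      rw [← hΛcast]
      exact_mod_cast (⟨v (i,j), hΛeq (i,j)⟩ : u (i,j) ∣ Λ (i,j))
    have hvΛ : (v (i,j) : ℤ) ∣ gZ ^ e - 1 := by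
      rw [← hΛcast]
      exact_mod_cast (⟨u (i,j), by rw [hΛeq (i,j)]; ring⟩ : v (i,j) ∣ Λ (i,j))
    have hbaseA : (a₁ : ℤ) * (u (i,j) : ℤ) ∣ (a:ℤ) * (gZ ^ e - 1) :=
      mul_dvd_mul ha₁a huΛ
    have hbaseB : (a₂ : ℤ) * (v (i,j) : ℤ) ∣ (a:ℤ) * (gZ ^ e - 1) :=
      mul_dvd_mul ha₂a hvΛ
    have hclaimA : (a₁ : ℤ) * (u (i,j) : ℤ) ∣ X i := by
      rw [hXsum i]
      have t1 : (a₁ : ℤ) * (u (i,j) : ℤ) ∣ κZ - (1 + Δ) := by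
        refine dvd_trans ?_ hM₁κ
        have hn : a₁ * u (i,j) ∣ M₁ := by
          rw [hM₁def]
          exact Nat.mul_dvd_mul_left a₁ (Finset.dvd_prod_of_mem u hqP)
        exact_mod_cast hn
      have t2 : (a₁ : ℤ) * (u (i,j) : ℤ) ∣ κZ * (gZ ^ S - 1) :=
        Dvd.dvd.mul_left
          (dvd_trans hbaseA (chain_dvd a e S gZ hgZ1 (haeS i j hij hj))) κZ
      have t3 : (a₁ : ℤ) * (u (i,j) : ℤ) ∣ gZ ^ (S - c i) - 1 :=
        dvd_trans hbaseA (chain_dvd a e (S - c i) gZ hgZ1 (haeSc i j hij hj))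
      exact dvd_sub (dvd_add t1 t2) t3
    have hclaimB : (a₂ : ℤ) * (v (i,j) : ℤ) ∣ Y i := by
      rw [hYsum i]
      have t1 : (a₂ : ℤ) * (v (i,j) : ℤ) ∣ (κZ - 1) * gZ ^ (c i) := by
        apply Dvd.dvd.mul_right
        refine dvd_trans ?_ hΞκ
        have hn : a₂ * v (i,j) ∣ Ξ := by
          rw [hΞdef]
          exact Nat.mul_dvd_mul_left a₂ (Finset.dvd_prod_of_mem v hqP)
        exact_mod_cast hn
      have t2 : (a₂ : ℤ) * (v (i,j) : ℤ) ∣ gZ ^ (c i) - 1 :=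
        dvd_trans hbaseB (chain_dvd a e (c i) gZ hgZ1 (hcdvd i j hij hj))
      exact dvd_add t1 t2
    have huvZ : gZ ^ e - 1 = (u (i,j) : ℤ) * (v (i,j) : ℤ) := by
      rw [← hΛcast]
      exact_mod_cast hΛeq (i,j)
    have hacast : (a:ℤ) = (a₁:ℤ) * (a₂:ℤ) := by exact_mod_cast hsplit
    have heq1 : (a:ℤ) * (x j - x i)
        = ((κZ * gZ ^ (c i)) * ((a₁:ℤ) * (u (i,j) : ℤ)))
          * (((F - Δ)) * ((a₂:ℤ) * (v (i,j) : ℤ))) := by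
      rw [hF3 i j hij hj, ← hedef, hacast, huvZ, hαdef]
      ring
    have heq2 : x i * (x i + Δ)
        = ((κZ * gZ ^ (c i)) * X i) * ((F - Δ) * Y i) := by
      rw [hF2 i, hF1 i hiR]
    rw [heq1, heq2]
    exact mul_dvd_mul (mul_dvd_mul_left _ hclaimA) (mul_dvd_mul_left _ hclaimB)
  refine ⟨x, ?_, ?_, hclass, hmain⟩
  · intro i j hij hj
    have h3 := hF3 i j hij hj
    have h4 : 1 ≤ gZ ^ (c j - c i) - 1 := by
      have : gZ ^ 1 ≤ gZ ^ (c j - c i) := by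
        apply pow_le_pow_right₀ (by omega)
        have := hcmono i j hij hj; omega
      rw [pow_one] at this
      omega
    have h5 : 1 ≤ gZ ^ (c i) := hgpow1 _
    have hp : 0 < α * gZ ^ (c i) * (gZ ^ (c j - c i) - 1) :=
      mul_pos (mul_pos (by omega) (by linarith)) (by linarith)
    linarith [h3, hp]
  · intro i hi
    have := hxge i hi
    omega

/-- main step: for every bound, there is a good n beyond it. -/
lemma main_aux (r a : ℕ) (ha : 0 < a) (b d : ℤ) (hbd : b < d)
    (a₁ a₂ : ℕ) (hsplit : a = a₁ * a₂) (hcop : Nat.Coprime a₁ a₂)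
    (h1b : (a₁:ℤ) ∣ b) (h2d : (a₂:ℤ) ∣ d)
    (f : Fin r → ℕ → ℂ) (hf : ∀ j, CompMultUnimodular (f j)) (ε : ℝ) (hε : 0 < ε)
    (m : ℕ) :
    ∃ n : ℕ, m < n ∧ 1 ≤ (a:ℤ)*n + b ∧ 1 ≤ (a:ℤ)*n + d ∧
      ∀ j, ‖f j (((a:ℤ)*n+b).toNat) - f j (((a:ℤ)*n+d).toNat)‖ < ε := by
  obtain ⟨R, hR0, hpig⟩ := pigeon r ε hε
  set Δ : ℤ := d - b with hΔdef
  have hΔ1 : 1 ≤ Δ := by omega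
  set B : ℤ := (a:ℤ) * ((m:ℤ)+2) + |b| + |d| with hBdef
  obtain ⟨x, hmono, hbig, hclass, hdvd⟩ :=
    clique a a₁ a₂ ha b d hbd hsplit hcop h1b h2d R B
  have hx1 : ∀ i, i < R → 1 ≤ x i := by
    intro i hi
    have h1 := hbig i hi
    have h2 : (0:ℤ) ≤ (a:ℤ) * ((m:ℤ)+2) := by positivity
    have h3 : (0:ℤ) ≤ |b| := abs_nonneg b
    have h4 : (0:ℤ) ≤ |d| := abs_nonneg d
    omega
  have hy1 : ∀ i, i < R → 1 ≤ x i + Δ := by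
    intro i hi
    have := hx1 i hi
    omega
  -- the torus vectors
  set v : ℕ → Fin r → ℂ := fun i t =>
    f t ((x i).toNat) * (starRingEnd ℂ) (f t ((x i + Δ).toNat)) with hvdef
  have hvnorm : ∀ i, i < R → ∀ t, ‖v i t‖ = 1 := by
    intro i hi t
    have h1 : ‖f t ((x i).toNat)‖ = 1 :=
      (hf t).1 _ (one_le_toNat (hx1 i hi))
    have h2 : ‖f t ((x i + Δ).toNat)‖ = 1 :=
      (hf t).1 _ (one_le_toNat (hy1 i hi))
    rw [hvdef]
    simp only [norm_mul, Complex.norm_conj, h1, h2, mul_one]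
  -- make v globally bounded (outside `i < R` irrelevant but norm bound needed for all i)
  set v' : ℕ → Fin r → ℂ := fun i => if i < R then v i else 0 with hv'def
  have hv'norm : ∀ i, ‖v' i‖ ≤ 1 := by
    intro i
    rw [hv'def]
    by_cases h : i < R
    · simp only [if_pos h]
      apply pi_norm_le_iff_of_nonneg zero_le_one |>.mpr
      intro t
      rw [hvnorm i h t]
    · simp [if_neg h]
  obtain ⟨i, j, hij, hjR, hdist⟩ := hpig v' hv'norm
  have hiR : i < R := by omega
  have hvv : ∀ t, ‖v i t - v j t‖ < ε := by
    intro t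
    have h1 : dist (v i t) (v j t) ≤ dist (v' i) (v' j) := by
      have h2 : v' i = v i := by rw [hv'def]; simp [if_pos hiR]
      have h3 : v' j = v j := by rw [hv'def]; simp [if_pos hjR]
      rw [h2, h3] at *
      exact dist_le_pi_dist (v i) (v j) t
    rw [Complex.dist_eq] at h1
    linarith
  -- derived pair
  set D : ℤ := x j - x i with hDdef
  have hDpos : 1 ≤ D := by
    have := hmono i j hij hjR; omega
  obtain ⟨w, hw⟩ := hdvd i j hij hjR
  have hADpos : (1:ℤ) ≤ (a:ℤ) * D := by
    have : (1:ℤ) ≤ (a:ℤ) := by exact_mod_cast ha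
    nlinarith
  have hw1 : 1 ≤ w := by
    by_contra hcon
    push_neg at hcon
    have hx := hx1 i hiR
    have hy := hy1 i hiR
    have h1 : (0:ℤ) < x i * (x i + (d - b)) := mul_pos (by omega) (by omega)
    have hAD' : (0:ℤ) ≤ (a:ℤ) * (x j - x i) := by
      have := hADpos
      rw [hDdef] at this
      omega
    have h2 : (a:ℤ) * (x j - x i) * w ≤ 0 :=
      mul_nonpos_of_nonneg_of_nonpos hAD' (by omega)
    linarith [hw]
  obtain ⟨ni, hni⟩ := hclass i hiR
  have hni2 : (m:ℤ) + 2 ≤ ni := by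
    have h1 := hbig i hiR
    rw [hBdef] at h1
    have hb' : b ≤ |b| := le_abs_self b
    have hd' : (0:ℤ) ≤ |d| := abs_nonneg d
    have h2 : (a:ℤ) * ((m:ℤ)+2) < (a:ℤ) * ni := by linarith [hni]
    exact le_of_lt (lt_of_mul_lt_mul_left h2 (by positivity))
  set N : ℤ := w + ni with hNdef
  have hNb : (a:ℤ) * N + b = (a:ℤ)*w + x i := by
    rw [hNdef]
    have : x i = (a:ℤ) * ni + b := by omega
    rw [this]; ring
  have he₁ : x i * (x j + Δ) = D * ((a:ℤ)*N + b) := by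
    rw [hNb, hDdef]
    linear_combination hw
  have he₂ : (x i + Δ) * x j = D * ((a:ℤ)*N + d) := by
    have hd' : d = b + Δ := by omega
    rw [hd']
    rw [show (a:ℤ)*N + (b + Δ) = ((a:ℤ)*N + b) + Δ by ring]
    rw [mul_add, ← he₁, hDdef]
    ring
  have hNb1 : 1 ≤ (a:ℤ)*N + b := by
    rw [hNb]
    have : (0:ℤ) ≤ (a:ℤ)*w := by positivity
    have := hx1 i hiR
    omega
  have hNd1 : 1 ≤ (a:ℤ)*N + d := by
    have : (a:ℤ)*N + d = ((a:ℤ)*N + b) + Δ := by omega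
    omega
  have hNpos : (m:ℤ) < N := by
    rw [hNdef]; omega
  -- conclusion with n := N.toNat
  refine ⟨N.toNat, ?_, ?_, ?_, ?_⟩
  · omega
  · have hNN : ((N.toNat : ℤ)) = N := Int.toNat_of_nonneg (by omega)
    rw [hNN]; exact hNb1
  · have hNN : ((N.toNat : ℤ)) = N := Int.toNat_of_nonneg (by omega)
    rw [hNN]; exact hNd1
  · intro t
    have hNN : ((N.toNat : ℤ)) = N := Int.toNat_of_nonneg (by omega)
    rw [hNN]
    have key := abs_eq (hf t) (hx1 i hiR) (hy1 i hiR) (hx1 j hjR) (hy1 j hjR)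
      hDpos hNb1 hNd1 he₁ he₂
    rw [key]
    exact hvv t

end SDA

theorem simultaneous_diophantine_approximation
    (r a : ℕ) (hr : 0 < r) (ha : 0 < a) (b d : ℤ) (hdvd : (a : ℤ) ∣ lcm b d)
    (f : Fin r → ℕ → ℂ) (hf : ∀ j, CompMultUnimodular (f j)) (ε : ℝ) (hε : 0 < ε) :
    {n : ℕ | 1 ≤ n ∧ 1 ≤ (a : ℤ) * n + b ∧ 1 ≤ (a : ℤ) * n + d ∧
      ∀ j, ‖f j (((a : ℤ) * n + b).toNat) - f j (((a : ℤ) * n + d).toNat)‖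
        < ε}.Infinite := by
  apply SDA.infinite_of_unbounded
  intro m
  rcases lt_trichotomy b d with hbd | heq | hdb
  · have hN : a ∣ Nat.lcm b.natAbs d.natAbs := by
      have h1 : (a:ℤ) ∣ (Int.lcm b d : ℤ) := by rw [Int.coe_lcm]; exact hdvd
      exact_mod_cast h1
    obtain ⟨a₁, a₂, hsp, hc, h1, h2⟩ := SDA.colsplitNat a _ _ hN
    have h1' : (a₁:ℤ) ∣ b := Int.dvd_natAbs.mp (by exact_mod_cast h1)
    have h2' : (a₂:ℤ) ∣ d := Int.dvd_natAbs.mp (by exact_mod_cast h2)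
    obtain ⟨n, hmn, hb1, hd1, habs⟩ :=
      SDA.main_aux r a ha b d hbd a₁ a₂ hsp hc h1' h2' f hf ε hε m
    exact ⟨n, ⟨by omega, hb1, hd1, habs⟩, hmn⟩
  · subst heq
    set n : ℕ := m + 1 + b.natAbs + 1 with hn
    have hball : 1 ≤ (a:ℤ) * n + b := by
      have h1 : ((n:ℕ):ℤ) ≤ (a:ℤ) * n := by
        have ha1 : (1:ℤ) ≤ (a:ℤ) := by exact_mod_cast ha
        nlinarith [Int.natCast_nonneg n]
      have h2 : -b ≤ (b.natAbs:ℤ) := by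
        rw [← Int.abs_eq_natAbs]
        exact neg_le_abs b
      have h3 : ((n:ℕ):ℤ) = (m:ℤ) + 1 + (b.natAbs:ℤ) + 1 := by
        rw [hn]; push_cast; ring
      linarith [Int.natCast_nonneg m]
    refine ⟨n, ⟨by omega, hball, hball, ?_⟩, by omega⟩
    intro j
    simp only [sub_self, norm_zero]
    exact hε
  · have hN : a ∣ Nat.lcm d.natAbs b.natAbs := by
      have h1 : (a:ℤ) ∣ (Int.lcm b d : ℤ) := by rw [Int.coe_lcm]; exact hdvd
      have h2 : Int.lcm b d = Nat.lcm d.natAbs b.natAbs := by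
        rw [Int.lcm]
        exact Nat.lcm_comm _ _
      rw [h2] at h1
      exact_mod_cast h1
    obtain ⟨a₁, a₂, hsp, hc, h1, h2⟩ := SDA.colsplitNat a _ _ hN
    have h1' : (a₁:ℤ) ∣ d := Int.dvd_natAbs.mp (by exact_mod_cast h1)
    have h2' : (a₂:ℤ) ∣ b := Int.dvd_natAbs.mp (by exact_mod_cast h2)
    obtain ⟨n, hmn, hd1, hb1, habs⟩ :=
      SDA.main_aux r a ha d b hdb a₁ a₂ hsp hc h1' h2' f hf ε hε m
    refine ⟨n, ⟨by omega, hb1, hd1, ?_⟩, hmn⟩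
    intro j
    rw [norm_sub_rev]
    exact habs j
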